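/- Let a, b, c be positive real numbers satisfying the strict triangle inequalities a < b + c, b < a + c, c < a + b together with a + b + c < 2π, and write sₐ = sin(a/2), s_b = sin(b/2), s_c = sin(c/2) and B = sin((a+b-c)/2)·sin((a+c-b)/2)·sin((b+c-a)/2). Then 2·sₐ·s_b·s_c/B ≥ (sₐ·s_b·s_c + sₐ³ + s_b³ + s_c³)/(2·sₐ·s_b·s_c) ≥ (1/2)(sₐ/s_b + s_b/sₐ + sₐ/s_c + s_c/sₐ + s_b/s_c + s_c/s_b) − 1 ≥ (1/3)(sₐ/s_b + s_b/sₐ + sₐ/s_c + s_c/sₐ + s_b/s_c + s_c/s_b) ≥ 2. -/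
import Mathlib
set_option maxHeartbeats 2000000

/-- product-to-difference identity -/
lemma sin_mul_sin' (u v : ℝ) :
    Real.sin (u + v) * Real.sin (u - v) = Real.sin u ^ 2 - Real.sin v ^ 2 := by
  have h1 := Real.sin_sq_add_cos_sq u
  have h2 := Real.sin_sq_add_cos_sq v
  rw [Real.sin_add, Real.sin_sub]
  linear_combination Real.sin u ^ 2 * h2 - Real.sin v ^ 2 * h1

/-- (sin v - sin w)² ≤ sin(v-w)² for v,w ∈ [0, π/2] -/
lemma sin_diff_sq (v w : ℝ) (hv0 : 0 ≤ v) (hw0 : 0 ≤ w)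
    (hv : v ≤ Real.pi / 2) (hw : w ≤ Real.pi / 2) :
    (Real.sin v - Real.sin w) ^ 2 ≤ Real.sin (v - w) ^ 2 := by
  have hs : Real.sin v - Real.sin w
      = 2 * Real.sin ((v - w) / 2) * Real.cos ((v + w) / 2) := Real.sin_sub_sin v w
  have hd : Real.sin (v - w) = 2 * Real.sin ((v - w) / 2) * Real.cos ((v - w) / 2) := by
    have h : v - w = 2 * ((v - w) / 2) := by ring
    rw [h, Real.sin_two_mul]
    ring_nf
  have hpi := Real.pi_pos
  have hc1 : 0 ≤ Real.cos ((v + w) / 2) :=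
    Real.cos_nonneg_of_mem_Icc ⟨by linarith, by linarith⟩
  have hc2 : Real.cos ((v + w) / 2) ≤ Real.cos ((v - w) / 2) := by
    rw [← Real.cos_abs ((v - w) / 2)]
    apply Real.cos_le_cos_of_nonneg_of_le_pi (abs_nonneg _) (by linarith)
    rw [abs_le]
    constructor <;> linarith
  have hcc : Real.cos ((v + w) / 2) ^ 2 ≤ Real.cos ((v - w) / 2) ^ 2 := by nlinarith
  rw [hs, hd]
  nlinarith [mul_nonneg (sq_nonneg (Real.sin ((v - w) / 2))) (sub_nonneg.2 hcc)]

/-- algebraic core, assuming z is the minimum -/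
lemma key3 (x y z : ℝ) (hz : 0 ≤ z) (h1 : z ≤ x) (h2 : z ≤ y) :
    ((y+z)*(z+x)*(x+y) + (y+z)^3 + (z+x)^3 + (x+y)^3) * (2*z * (2*y) * (2*x))
      ≤ 4 * ((y+z)*(z+x)*(x+y))^2 := by
  obtain ⟨p, hp, rfl⟩ : ∃ p, 0 ≤ p ∧ x = z + p := ⟨x - z, by linarith, by ring⟩
  obtain ⟨q, hq, rfl⟩ : ∃ q, 0 ≤ q ∧ y = z + q := ⟨y - z, by linarith, by ring⟩
  have t1 : 0 ≤ p^2*q^4 := by positivity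
  have t2 : 0 ≤ p^3*q^3 := mul_nonneg (pow_nonneg hp 3) (pow_nonneg hq 3)
  have t3 : 0 ≤ p^4*q^2 := by positivity
  have t4 : 0 ≤ z*(p^2*q^3) := mul_nonneg hz (mul_nonneg (pow_nonneg hp 2) (pow_nonneg hq 3))
  have t5 : 0 ≤ z*(p^3*q^2) := mul_nonneg hz (mul_nonneg (pow_nonneg hp 3) (pow_nonneg hq 2))
  have t6 : 0 ≤ z^2*(p^2*q^2) := by positivity
  have t7 : 0 ≤ z^3*(p*q^2) := mul_nonneg (pow_nonneg hz 3) (mul_nonneg hp (pow_nonneg hq 2))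
  have t8 : 0 ≤ z^3*(p^2*q) := mul_nonneg (pow_nonneg hz 3) (mul_nonneg (pow_nonneg hp 2) hq)
  have t9 : 0 ≤ z^4*(p-q)^2 := by positivity
  have t10 : 0 ≤ z^4*(p*q) := mul_nonneg (pow_nonneg hz 4) (mul_nonneg hp hq)
  linarith [t1, t2, t3, t4, t5, t6, t7, t8, t9, t10]

lemma main_alg (α β γ : ℝ) (h1 : 0 ≤ β + γ - α) (h2 : 0 ≤ α + γ - β) (h3 : 0 ≤ α + β - γ) :
    (α*β*γ + α^3 + β^3 + γ^3) * ((α+β-γ) * (α+γ-β) * (β+γ-α)) ≤ 4 * (α*β*γ)^2 := by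
  obtain ⟨x, y, z, hx, hy, hz, e1, e2, e3⟩ :
      ∃ x y z, 0 ≤ x ∧ 0 ≤ y ∧ 0 ≤ z ∧ α = y + z ∧ β = z + x ∧ γ = x + y :=
    ⟨(β+γ-α)/2, (α+γ-β)/2, (α+β-γ)/2, by linarith, by linarith, by linarith,
      by ring, by ring, by ring⟩
  subst e1; subst e2; subst e3
  rcases le_total z x with hzx | hxz
  · rcases le_total z y with hzy | hyz
    · have := key3 x y z hz hzx hzy
      nlinarith [this]
    · -- y ≤ z ≤ x, y is min
      have := key3 x z y hy (le_trans hyz hzx) hyz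
      linarith [this]
  · rcases le_total x y with hxy | hyx
    · -- x ≤ z and x ≤ y : x min
      have := key3 y z x hx hxy hxz
      linarith [this]
    · -- y ≤ x ≤ z : y min
      have := key3 x z y hy hyx (le_trans hyx hxz)
      linarith [this]

lemma schur_ord (a b c : ℝ) (hc : 0 ≤ c) (h1 : c ≤ b) (h2 : b ≤ a) :
    a^2*b + a^2*c + b^2*a + b^2*c + c^2*a + c^2*b ≤ a^3 + b^3 + c^3 + 3*(a*b*c) := by
  nlinarith [mul_nonneg (sq_nonneg (a-b)) (by linarith : (0:ℝ) ≤ a + b - c),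
    mul_nonneg (mul_nonneg hc (by linarith : (0:ℝ) ≤ a - c)) (by linarith : (0:ℝ) ≤ b - c)]

lemma schur3 (a b c : ℝ) (ha : 0 ≤ a) (hb : 0 ≤ b) (hc : 0 ≤ c) :
    a^2*b + a^2*c + b^2*a + b^2*c + c^2*a + c^2*b ≤ a^3 + b^3 + c^3 + 3*(a*b*c) := by
  rcases le_total a b with h1 | h1 <;> rcases le_total b c with h2 | h2 <;>
    rcases le_total a c with h3 | h3
  · nlinarith [schur_ord c b a ha h1 h2]
  · nlinarith [schur_ord c b a ha h1 h2]
  · nlinarith [schur_ord b c a ha h3 h2]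
  · nlinarith [schur_ord b a c hc h3 h1]
  · nlinarith [schur_ord c a b hb h1 h3]
  · nlinarith [schur_ord a c b hb h2 h3]
  · nlinarith [schur_ord a b c hc h2 h1]
  · nlinarith [schur_ord a b c hc h2 h1]

lemma le_of_sq_le_sq'' (x y : ℝ) (hx : 0 < x) (hy : 0 < y) (h : x ^ 2 ≤ y ^ 2) : x ≤ y := by
  nlinarith

lemma tri_of_sq (s t u : ℝ) (hs : 0 < s) (h : (t - u)^2 < s^2) : 0 < s + t - u := by
  nlinarith [h, hs]

theorem stmt_17 (a b c : ℝ) (ha : 0 < a) (hb : 0 < b) (hc : 0 < c)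
    (hab : a < b + c) (hbc : b < a + c) (hca : c < a + b)
    (hsum : a + b + c < 2 * Real.pi) :
    let sa := Real.sin (a / 2)
    let sb := Real.sin (b / 2)
    let sc := Real.sin (c / 2)
    let B := Real.sin ((a + b - c) / 2) * Real.sin ((a + c - b) / 2) *
      Real.sin ((b + c - a) / 2)
    2 * sa * sb * sc / B ≥ (sa * sb * sc + sa ^ 3 + sb ^ 3 + sc ^ 3) / (2 * sa * sb * sc) ∧
    (sa * sb * sc + sa ^ 3 + sb ^ 3 + sc ^ 3) / (2 * sa * sb * sc) ≥
      1 / 2 * (sa / sb + sb / sa + sa / sc + sc / sa + sb / sc + sc / sb) - 1 ∧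
    1 / 2 * (sa / sb + sb / sa + sa / sc + sc / sa + sb / sc + sc / sb) - 1 ≥
      1 / 3 * (sa / sb + sb / sa + sa / sc + sc / sa + sb / sc + sc / sb) ∧
    1 / 3 * (sa / sb + sb / sa + sa / sc + sc / sa + sb / sc + sc / sb) ≥ 2 := by
  have hpi := Real.pi_pos
  have hapi : a < Real.pi := by linarith
  have hbpi : b < Real.pi := by linarith
  have hcpi : c < Real.pi := by linarith
  intro sa sb sc B
  have hsa : 0 < sa := Real.sin_pos_of_pos_of_lt_pi (by linarith) (by linarith)
  have hsb : 0 < sb := Real.sin_pos_of_pos_of_lt_pi (by linarith) (by linarith)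
  have hsc : 0 < sc := Real.sin_pos_of_pos_of_lt_pi (by linarith) (by linarith)
  -- the three factors of B
  have hZ : 0 < Real.sin ((a + b - c) / 2) :=
    Real.sin_pos_of_pos_of_lt_pi (by linarith) (by linarith)
  have hY : 0 < Real.sin ((a + c - b) / 2) :=
    Real.sin_pos_of_pos_of_lt_pi (by linarith) (by linarith)
  have hX : 0 < Real.sin ((b + c - a) / 2) :=
    Real.sin_pos_of_pos_of_lt_pi (by linarith) (by linarith)
  have hB : 0 < B := mul_pos (mul_pos hZ hY) hX
  -- product identities
  have P1 : Real.sin ((a + b - c) / 2) * Real.sin ((a + c - b) / 2)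
      = sa ^ 2 - Real.sin ((b - c) / 2) ^ 2 := by
    have e1 : (a + b - c) / 2 = a / 2 + (b - c) / 2 := by ring
    have e2 : (a + c - b) / 2 = a / 2 - (b - c) / 2 := by ring
    rw [e1, e2]; exact sin_mul_sin' _ _
  have P2 : Real.sin ((b + c - a) / 2) * Real.sin ((a + b - c) / 2)
      = sb ^ 2 - Real.sin ((c - a) / 2) ^ 2 := by
    have e1 : (b + c - a) / 2 = b / 2 + (c - a) / 2 := by ring
    have e2 : (a + b - c) / 2 = b / 2 - (c - a) / 2 := by ring
    rw [e1, e2]; exact sin_mul_sin' _ _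
  have P3 : Real.sin ((a + c - b) / 2) * Real.sin ((b + c - a) / 2)
      = sc ^ 2 - Real.sin ((a - b) / 2) ^ 2 := by
    have e1 : (a + c - b) / 2 = c / 2 + (a - b) / 2 := by ring
    have e2 : (b + c - a) / 2 = c / 2 - (a - b) / 2 := by ring
    rw [e1, e2]; exact sin_mul_sin' _ _
  -- sine difference bounds
  have Q1 : (sb - sc) ^ 2 ≤ Real.sin ((b - c) / 2) ^ 2 := by
    have := sin_diff_sq (b / 2) (c / 2) (by linarith) (by linarith) (by linarith) (by linarith)
    have e : b / 2 - c / 2 = (b - c) / 2 := by ring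
    rwa [e] at this
  have Q2 : (sc - sa) ^ 2 ≤ Real.sin ((c - a) / 2) ^ 2 := by
    have := sin_diff_sq (c / 2) (a / 2) (by linarith) (by linarith) (by linarith) (by linarith)
    have e : c / 2 - a / 2 = (c - a) / 2 := by ring
    rwa [e] at this
  have Q3 : (sa - sb) ^ 2 ≤ Real.sin ((a - b) / 2) ^ 2 := by
    have := sin_diff_sq (a / 2) (b / 2) (by linarith) (by linarith) (by linarith) (by linarith)
    have e : a / 2 - b / 2 = (a - b) / 2 := by ring
    rwa [e] at this
  have hBdef : B = Real.sin ((a + b - c) / 2) * Real.sin ((a + c - b) / 2) *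
      Real.sin ((b + c - a) / 2) := rfl
  clear_value sa sb sc B
  -- upper bounds for the pairwise products
  have U1 : Real.sin ((a + b - c) / 2) * Real.sin ((a + c - b) / 2)
      ≤ sa ^ 2 - (sb - sc) ^ 2 := by rw [P1]; linarith
  have U2 : Real.sin ((b + c - a) / 2) * Real.sin ((a + b - c) / 2)
      ≤ sb ^ 2 - (sc - sa) ^ 2 := by rw [P2]; linarith
  have U3 : Real.sin ((a + c - b) / 2) * Real.sin ((b + c - a) / 2)
      ≤ sc ^ 2 - (sa - sb) ^ 2 := by rw [P3]; linarith
  have V1 : 0 < Real.sin ((a + b - c) / 2) * Real.sin ((a + c - b) / 2) := mul_pos hZ hY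
  have V2 : 0 < Real.sin ((b + c - a) / 2) * Real.sin ((a + b - c) / 2) := mul_pos hX hZ
  have V3 : 0 < Real.sin ((a + c - b) / 2) * Real.sin ((b + c - a) / 2) := mul_pos hY hX
  -- triangle inequalities for the sines
  have W1 : (sb - sc) ^ 2 < sa ^ 2 := by linarith [V1, U1]
  have W2 : (sc - sa) ^ 2 < sb ^ 2 := by linarith [V2, U2]
  have W3 : (sa - sb) ^ 2 < sc ^ 2 := by linarith [V3, U3]
  have T1 : 0 < sa + sb - sc := tri_of_sq sa sb sc hsa W1
  have T1' : 0 < sa + sc - sb := tri_of_sq sa sc sb hsa (by linarith [W1])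
  have T2 : 0 < sb + sc - sa := tri_of_sq sb sc sa hsb (by linarith [W2])
  -- B ≤ E
  have hE : 0 < (sa + sb - sc) * (sa + sc - sb) * (sb + sc - sa) :=
    mul_pos (mul_pos T1 T1') T2
  have hB2 : B ^ 2 ≤ ((sa + sb - sc) * (sa + sc - sb) * (sb + sc - sa)) ^ 2 := by
    have step1 : (Real.sin ((a + b - c) / 2) * Real.sin ((a + c - b) / 2)) *
        (Real.sin ((b + c - a) / 2) * Real.sin ((a + b - c) / 2)) *
        (Real.sin ((a + c - b) / 2) * Real.sin ((b + c - a) / 2))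
        ≤ (sa ^ 2 - (sb - sc) ^ 2) * (sb ^ 2 - (sc - sa) ^ 2) * (sc ^ 2 - (sa - sb) ^ 2) := by
      have m1 : (Real.sin ((a + b - c) / 2) * Real.sin ((a + c - b) / 2)) *
          (Real.sin ((b + c - a) / 2) * Real.sin ((a + b - c) / 2))
          ≤ (sa ^ 2 - (sb - sc) ^ 2) * (sb ^ 2 - (sc - sa) ^ 2) :=
        mul_le_mul U1 U2 V2.le (by linarith [V1, U1])
      exact mul_le_mul m1 U3 V3.le
        (mul_nonneg (by linarith [V1, U1]) (by linarith [V2, U2]))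
    calc B ^ 2 = (Real.sin ((a + b - c) / 2) * Real.sin ((a + c - b) / 2)) *
        (Real.sin ((b + c - a) / 2) * Real.sin ((a + b - c) / 2)) *
        (Real.sin ((a + c - b) / 2) * Real.sin ((b + c - a) / 2)) := by rw [hBdef]; ring
      _ ≤ (sa ^ 2 - (sb - sc) ^ 2) * (sb ^ 2 - (sc - sa) ^ 2) * (sc ^ 2 - (sa - sb) ^ 2) := step1
      _ = ((sa + sb - sc) * (sa + sc - sb) * (sb + sc - sa)) ^ 2 := by ring
  have hBE : B ≤ (sa + sb - sc) * (sa + sc - sb) * (sb + sc - sa) :=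
    le_of_sq_le_sq'' _ _ hB hE hB2
  -- the key algebraic inequality
  have halg : (sa * sb * sc + sa ^ 3 + sb ^ 3 + sc ^ 3) *
      ((sa + sb - sc) * (sa + sc - sb) * (sb + sc - sa)) ≤ 4 * (sa * sb * sc) ^ 2 :=
    main_alg sa sb sc (by linarith) (by linarith) (by linarith)
  have hP : 0 < sa * sb * sc := mul_pos (mul_pos hsa hsb) hsc
  have hPS : 0 < sa * sb * sc + sa ^ 3 + sb ^ 3 + sc ^ 3 := by positivity
  have h2P : (0:ℝ) < 2 * sa * sb * sc := by linarith [hP]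
  refine ⟨?_, ?_, ?_, ?_⟩
  · rw [ge_iff_le, div_le_div_iff₀ h2P hB]
    calc (sa * sb * sc + sa ^ 3 + sb ^ 3 + sc ^ 3) * B
        ≤ (sa * sb * sc + sa ^ 3 + sb ^ 3 + sc ^ 3) *
            ((sa + sb - sc) * (sa + sc - sb) * (sb + sc - sa)) :=
          mul_le_mul_of_nonneg_left hBE hPS.le
      _ ≤ 4 * (sa * sb * sc) ^ 2 := halg
      _ = 2 * sa * sb * sc * (2 * sa * sb * sc) := by ring
  · rw [ge_iff_le, ← sub_nonneg]
    have expand : (sa * sb * sc + sa ^ 3 + sb ^ 3 + sc ^ 3) / (2 * sa * sb * sc) -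
        (1 / 2 * (sa / sb + sb / sa + sa / sc + sc / sa + sb / sc + sc / sb) - 1)
        = ((sa ^ 3 + sb ^ 3 + sc ^ 3 + 3 * (sa * sb * sc)) -
          (sa^2*sb + sa^2*sc + sb^2*sa + sb^2*sc + sc^2*sa + sc^2*sb)) / (2 * sa * sb * sc) := by
      field_simp
      ring
    rw [expand]
    apply div_nonneg _ h2P.le
    have := schur3 sa sb sc hsa.le hsb.le hsc.le
    linarith
  · have r1 : 2 ≤ sa / sb + sb / sa := by
      rw [div_add_div _ _ hsb.ne' hsa.ne', le_div_iff₀ (mul_pos hsb hsa)]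
      linarith [sq_nonneg (sa - sb)]
    have r2 : 2 ≤ sa / sc + sc / sa := by
      rw [div_add_div _ _ hsc.ne' hsa.ne', le_div_iff₀ (mul_pos hsc hsa)]
      linarith [sq_nonneg (sa - sc)]
    have r3 : 2 ≤ sb / sc + sc / sb := by
      rw [div_add_div _ _ hsc.ne' hsb.ne', le_div_iff₀ (mul_pos hsc hsb)]
      linarith [sq_nonneg (sb - sc)]
    linarith
  · have r1 : 2 ≤ sa / sb + sb / sa := by
      rw [div_add_div _ _ hsb.ne' hsa.ne', le_div_iff₀ (mul_pos hsb hsa)]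
      linarith [sq_nonneg (sa - sb)]
    have r2 : 2 ≤ sa / sc + sc / sa := by
      rw [div_add_div _ _ hsc.ne' hsa.ne', le_div_iff₀ (mul_pos hsc hsa)]
      linarith [sq_nonneg (sa - sc)]
    have r3 : 2 ≤ sb / sc + sc / sb := by
      rw [div_add_div _ _ hsc.ne' hsb.ne', le_div_iff₀ (mul_pos hsc hsb)]
      linarith [sq_nonneg (sb - sc)]
    linarith
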